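/- arXiv:math/0306341 — 2 statements merged into one kernel-verified Lean document; each statement's English description precedes it below -/
import Mathlib

section
/- Let K be a compact Hausdorff topological group. The formula λ · (t, k₁, k₂) = (t + λ, k₁, k₁^λ k₂), for λ ∈ ℤ and (t, k₁, k₂) ∈ ℝ × K × K, defines a continuous action of ℤ on ℝ × K × K which is free and properly discontinuous, and the quotient map ℝ × K × K → (ℝ × K × K)/ℤ is a covering map. -/
def zAct (K : Type*) [Group K] (n : ℤ) (x : ℝ × K × K) : ℝ × K × K :=
  (x.1 + n, x.2.1, x.2.1 ^ n * x.2.2)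

section Aux

variable {K : Type*} [Group K]

lemma zAct_zero (x : ℝ × K × K) : zAct K 0 x = x := by
  simp [zAct]

lemma zAct_add (m n : ℤ) (x : ℝ × K × K) :
    zAct K (m + n) x = zAct K m (zAct K n x) := by
  simp only [zAct]
  refine Prod.ext ?_ (Prod.ext rfl ?_) <;> dsimp only
  · push_cast; ring
  · rw [zpow_add, mul_assoc]

lemma zAct_cancel (n : ℤ) (x : ℝ × K × K) : zAct K (-n) (zAct K n x) = x := by
  rw [← zAct_add, neg_add_cancel, zAct_zero]

lemma zAct_fst (n : ℤ) (x : ℝ × K × K) : (zAct K n x).1 = x.1 + n := rfl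

/-- The orbit equivalence relation. -/
abbrev zRel (K : Type*) [Group K] : (ℝ × K × K) → (ℝ × K × K) → Prop :=
  fun x y => ∃ n : ℤ, zAct K n x = y

lemma zRel_equiv : Equivalence (zRel K) := by
  refine ⟨fun x => ⟨0, zAct_zero x⟩, ?_, ?_⟩
  · rintro x y ⟨n, rfl⟩
    exact ⟨-n, zAct_cancel n x⟩
  · rintro x y z ⟨n, rfl⟩ ⟨m, rfl⟩
    exact ⟨m + n, zAct_add m n x⟩

lemma zQuot_eq_iff (x y : ℝ × K × K) :
    Quot.mk (zRel K) x = Quot.mk (zRel K) y ↔ ∃ n : ℤ, zAct K n x = y :=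
  Quot.eq.trans (zRel_equiv.eqvGen_iff)

lemma zQuot_zAct (n : ℤ) (x : ℝ × K × K) :
    Quot.mk (zRel K) (zAct K n x) = Quot.mk (zRel K) x :=
  (zQuot_eq_iff _ _).2 ⟨-n, zAct_cancel n x⟩

/-- The open slab around `x₀` of width 1 in the first coordinate. -/
def zSlab (K : Type*) [Group K] (x₀ : ℝ × K × K) : Set (ℝ × K × K) :=
  Set.Ioo (x₀.1 - 2⁻¹) (x₀.1 + 2⁻¹) ×ˢ (Set.univ : Set (K × K))

lemma mem_zSlab (x₀ : ℝ × K × K) : x₀ ∈ zSlab K x₀ :=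
  ⟨⟨by norm_num, by norm_num⟩, trivial⟩

lemma zSlab_floor {x₀ x : ℝ × K × K} {n : ℤ} (h : zAct K n x ∈ zSlab K x₀) :
    ⌊x.1 - x₀.1 + 2⁻¹⌋ = -n := by
  have h1 : x₀.1 - 2⁻¹ < (zAct K n x).1 := h.1.1
  have h2 : (zAct K n x).1 < x₀.1 + 2⁻¹ := h.1.2
  rw [zAct_fst] at h1 h2
  rw [Int.floor_eq_iff]
  constructor <;> push_cast <;> linarith

variable [TopologicalSpace K] [IsTopologicalGroup K]

lemma zAct_continuous (n : ℤ) : Continuous (zAct K n) := by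
  unfold zAct
  fun_prop

lemma zSlab_open (x₀ : ℝ × K × K) : IsOpen (zSlab K x₀) :=
  isOpen_Ioo.prod isOpen_univ

omit [TopologicalSpace K] [IsTopologicalGroup K] in
lemma zQuot_preimage_image (W : Set (ℝ × K × K)) :
    Quot.mk (zRel K) ⁻¹' (Quot.mk (zRel K) '' W) = ⋃ n : ℤ, zAct K n ⁻¹' W := by
  ext x
  simp only [Set.mem_preimage, Set.mem_image, Set.mem_iUnion]
  constructor
  · rintro ⟨w, hw, hq⟩
    obtain ⟨n, rfl⟩ := (zQuot_eq_iff _ _).1 hq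
    exact ⟨-n, by rwa [zAct_cancel]⟩
  · rintro ⟨n, hn⟩
    exact ⟨zAct K n x, hn, zQuot_zAct n x⟩

lemma zQuot_isOpenMap : IsOpenMap (Quot.mk (zRel K)) := by
  intro W hW
  rw [← isQuotientMap_quot_mk.isOpen_preimage, zQuot_preimage_image]
  exact isOpen_iUnion fun n => (zAct_continuous n).isOpen_preimage W hW

lemma zCover_evenly (x₀ : ℝ × K × K) :
    IsEvenlyCovered (Quot.mk (zRel K)) (Quot.mk (zRel K) x₀) ℤ := by
  classical
  haveI : Nonempty ↥(zSlab K x₀) := ⟨⟨x₀, mem_zSlab x₀⟩⟩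
  set q : (ℝ × K × K) → Quot (zRel K) := Quot.mk (zRel K) with hq_def
  set g : ↥(zSlab K x₀) → Quot (zRel K) := fun u => q u.val with hg_def
  have hg_cont : Continuous g := continuous_quot_mk.comp continuous_subtype_val
  have hg_inj : Function.Injective g := by
    intro u v h
    obtain ⟨n, hn⟩ := (zQuot_eq_iff _ _).1 h
    have h0 : ⌊(u : ℝ × K × K).1 - x₀.1 + 2⁻¹⌋ = -n := zSlab_floor (hn ▸ v.2)
    have h0' : ⌊(u : ℝ × K × K).1 - x₀.1 + 2⁻¹⌋ = -(0 : ℤ) :=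
      zSlab_floor (by rw [zAct_zero]; exact u.2)
    have hn0 : n = 0 := by omega
    rw [hn0, zAct_zero] at hn
    exact Subtype.ext hn
  have hg_open : IsOpenMap g := zQuot_isOpenMap.comp (zSlab_open x₀).isOpenMap_subtype_val
  have hg : Topology.IsOpenEmbedding g :=
    .of_continuous_injective_isOpenMap hg_cont hg_inj hg_open
  set e0 := hg.toOpenPartialHomeomorph g with he0_def
  set s : Quot (zRel K) → ℝ × K × K := fun y => (e0.symm y).val with hs_def
  have hs_mem : ∀ y, s y ∈ zSlab K x₀ := fun y => (e0.symm y).2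
  have hs_sec : ∀ y ∈ Set.range g, q (s y) = y := fun y hy =>
    Topology.IsOpenEmbedding.toOpenPartialHomeomorph_right_inv g hg hy
  have hs_cont : ContinuousOn s (Set.range g) := by
    have h1 : ContinuousOn e0.symm (Set.range g) := by
      have := e0.continuousOn_symm
      rwa [Topology.IsOpenEmbedding.toOpenPartialHomeomorph_target] at this
    exact continuous_subtype_val.comp_continuousOn h1
  -- key computation used in left inverse and continuity
  have key : ∀ x : ℝ × K × K, q x ∈ Set.range g →
      ∃ k : ℤ, zAct K k (s (q x)) = x ∧ ⌊x.1 - x₀.1 + 2⁻¹⌋ = k := by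
    intro x hx
    obtain ⟨k, hk⟩ := (zQuot_eq_iff (s (q x)) x).1 (hs_sec _ hx)
    refine ⟨k, hk, ?_⟩
    have : zAct K (-k) x ∈ zSlab K x₀ := by
      rw [← hk, zAct_cancel]; exact hs_mem _
    have := zSlab_floor this
    omega
  refine IsEvenlyCovered.of_trivialization (t :=
    { toFun := fun x => (q x, ⌊x.1 - x₀.1 + 2⁻¹⌋),
      invFun := fun p => zAct K p.2 (s p.1),
      source := q ⁻¹' Set.range g,
      target := Set.range g ×ˢ Set.univ,
      baseSet := Set.range g,
      open_baseSet := hg.isOpen_range,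
      source_eq := rfl,
      target_eq := rfl,
      proj_toFun := fun x _ => rfl,
      open_source := hg.isOpen_range.preimage continuous_quot_mk,
      open_target := hg.isOpen_range.prod isOpen_univ,
      map_source' := fun x hx => ⟨hx, trivial⟩,
      map_target' := ?_,
      left_inv' := ?_,
      right_inv' := ?_,
      continuousOn_toFun := ?_,
      continuousOn_invFun := ?_ }) ⟨⟨x₀, mem_zSlab x₀⟩, rfl⟩
  · -- map_target'
    rintro ⟨y, n⟩ ⟨hy, -⟩
    show q (zAct K n (s y)) ∈ Set.range g
    rw [hq_def, zQuot_zAct]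
    rw [← hq_def, hs_sec y hy]
    exact hy
  · -- left_inv'
    intro x hx
    obtain ⟨k, hk, hfl⟩ := key x hx
    show zAct K (⌊x.1 - x₀.1 + 2⁻¹⌋) (s (q x)) = x
    rw [hfl, hk]
  · -- right_inv'
    rintro ⟨y, n⟩ ⟨hy, -⟩
    have h1 : q (zAct K n (s y)) = y := by
      rw [hq_def, zQuot_zAct, ← hq_def, hs_sec y hy]
    have h2 : ⌊(zAct K n (s y)).1 - x₀.1 + 2⁻¹⌋ = n := by
      have : zAct K (-n) (zAct K n (s y)) ∈ zSlab K x₀ := by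
        rw [zAct_cancel]; exact hs_mem y
      have := zSlab_floor this
      omega
    exact Prod.ext h1 h2
  · -- continuousOn_toFun
    intro x hx
    apply ContinuousAt.continuousWithinAt
    obtain ⟨k, hk, hfl⟩ := key x hx
    refine ContinuousAt.prodMk continuous_quot_mk.continuousAt ?_
    have hO : IsOpen {z : ℝ × K × K | z.1 - x₀.1 + 2⁻¹ ∈ Set.Ioo ((k : ℝ)) (k + 1)} := by
      refine Continuous.isOpen_preimage (by fun_prop) _ isOpen_Ioo
    have hslab : zAct K (-k) x ∈ zSlab K x₀ := by
      rw [← hk, zAct_cancel]; exact hs_mem _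
    have hxO : x ∈ {z : ℝ × K × K | z.1 - x₀.1 + 2⁻¹ ∈ Set.Ioo ((k : ℝ)) (k + 1)} := by
      have h1 : x₀.1 - 2⁻¹ < (zAct K (-k) x).1 := hslab.1.1
      have h2 : (zAct K (-k) x).1 < x₀.1 + 2⁻¹ := hslab.1.2
      rw [zAct_fst] at h1 h2
      constructor <;> push_cast at h1 h2 ⊢ <;> linarith
    refine Filter.EventuallyEq.continuousAt (y := k) ?_
    filter_upwards [hO.mem_nhds hxO] with z hz
    exact Int.floor_eq_iff.2 ⟨le_of_lt hz.1, by push_cast; linarith [hz.2]⟩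
  · -- continuousOn_invFun
    rintro ⟨y, n⟩ ⟨hy, -⟩
    apply ContinuousAt.continuousWithinAt
    have h2 : ∀ᶠ z : Quot (zRel K) × ℤ in nhds (y, n), z.2 = n := by
      have hop : IsOpen {z : Quot (zRel K) × ℤ | z.2 = n} := by
        have : {z : Quot (zRel K) × ℤ | z.2 = n} = Prod.snd ⁻¹' {n} := rfl
        rw [this]
        exact (isOpen_discrete _).preimage continuous_snd
      exact hop.mem_nhds rfl
    have hca : ContinuousAt (fun z : Quot (zRel K) × ℤ => zAct K n (s z.1)) (y, n) := by
      refine (zAct_continuous n).continuousAt.comp ?_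
      exact (hs_cont.continuousAt (hg.isOpen_range.mem_nhds hy)).comp continuousAt_fst
    refine hca.congr ?_
    filter_upwards [h2] with z hz
    rw [hz]

omit [IsTopologicalGroup K] in
lemma zProper (L M : Set (ℝ × K × K)) (hL : IsCompact L) (hM : IsCompact M) :
    {n : ℤ | (zAct K n '' L ∩ M).Nonempty}.Finite := by
  obtain ⟨u, hu⟩ := (hL.image continuous_fst).bddAbove
  obtain ⟨l, hl⟩ := (hL.image continuous_fst).bddBelow
  obtain ⟨u', hu'⟩ := (hM.image continuous_fst).bddAbove
  obtain ⟨l', hl'⟩ := (hM.image continuous_fst).bddBelow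
  refine Set.Finite.subset (Set.finite_Icc ⌈l' - u⌉ ⌊u' - l⌋) ?_
  rintro n ⟨p, ⟨x, hxL, rfl⟩, hpM⟩
  have h1 : x.1 ≤ u := hu ⟨x, hxL, rfl⟩
  have h2 : l ≤ x.1 := hl ⟨x, hxL, rfl⟩
  have h3 : (zAct K n x).1 ≤ u' := hu' ⟨_, hpM, rfl⟩
  have h4 : l' ≤ (zAct K n x).1 := hl' ⟨_, hpM, rfl⟩
  rw [zAct_fst] at h3 h4
  exact Set.mem_Icc.2 ⟨Int.ceil_le.2 (by linarith), Int.le_floor.2 (by linarith)⟩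

end Aux

/-- The formula `λ · (t, k₁, k₂) = (t + λ, k₁, k₁^λ k₂)` defines a continuous action
of `ℤ` on `ℝ × K × K` which is free and properly discontinuous, and the quotient map
to the orbit space is a covering map. -/
theorem stmt3 (K : Type*) [Group K] [TopologicalSpace K] [IsTopologicalGroup K]
    [CompactSpace K] [T2Space K] :
    (∀ n : ℤ, Continuous (zAct K n)) ∧
    (∀ x, zAct K 0 x = x) ∧
    (∀ m n x, zAct K (m + n) x = zAct K m (zAct K n x)) ∧
    (∀ (n : ℤ) (x : ℝ × K × K), zAct K n x = x → n = 0) ∧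
    (∀ L M : Set (ℝ × K × K), IsCompact L → IsCompact M →
      {n : ℤ | (zAct K n '' L ∩ M).Nonempty}.Finite) ∧
    IsCoveringMap (Quot.mk (fun x y : ℝ × K × K => ∃ n : ℤ, zAct K n x = y)) := by
  refine ⟨zAct_continuous, zAct_zero, zAct_add, ?_, zProper, ?_⟩
  · intro n x h
    have h1 := congrArg Prod.fst h
    rw [zAct_fst] at h1
    have h2 : (n : ℝ) = 0 := by linarith
    exact_mod_cast h2
  · intro x
    induction x using Quot.ind with
    | mk x₀ => exact (zCover_evenly x₀).to_isEvenlyCovered_preimage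
end

section
/- Let G be any group and let ρ: F → G be a group homomorphism with ρ(R) = 1. Then in the free ℤ-module on G (i.e. ℤ[G]), ∑_{i=1}^{2g} ∑_{τ=0,1} (−1)^τ ( [ρ(x_i)] − [ρ(γ^τ_i x_i)] + [ρ(γ^τ_i)] ) = 0, where [h] denotes the basis element of ℤ[G] corresponding to h ∈ G. (This expresses that the chain c = ∑_{i=1}^{2g} (∂R/∂x_i) ⊗ x_i is a 2-cycle in the inhomogeneous bar complex of the surface group Π with trivial ℤ coefficients; this cycle represents the fundamental class generating H₂(Π).) -/
open scoped commutatorElement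

/-- The list of commutators `[x_{2j-1}, x_{2j}]`, `j = 1, …, g`, in the free group on
`2g` generators. -/
def commList (g : ℕ) : List (FreeGroup (Fin (2 * g))) :=
  List.ofFn (fun l : Fin g =>
    ⁅FreeGroup.of (⟨2 * l.1, by have := l.2; omega⟩ : Fin (2 * g)),
     FreeGroup.of (⟨2 * l.1 + 1, by have := l.2; omega⟩ : Fin (2 * g))⁆)

/-- The partial product `∏_{l=1}^{m} [x_{2l-1}, x_{2l}]`. -/
def prodComm (g m : ℕ) : FreeGroup (Fin (2 * g)) := ((commList g).take m).prod

/-- The surface relation `R = ∏_{l=1}^{g} [x_{2l-1}, x_{2l}]`. -/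
def surfaceRel (g : ℕ) : FreeGroup (Fin (2 * g)) := (commList g).prod

/-- `γ⁰_i` for `i = k.1 + 1 ∈ {1, …, 2g}`. -/
def gam0 (g : ℕ) (k : Fin (2 * g)) : FreeGroup (Fin (2 * g)) :=
  if k.1 % 2 = 0 then prodComm g (k.1 / 2)
  else prodComm g (k.1 / 2) *
    FreeGroup.of ⟨2 * (k.1 / 2), by have := k.2; omega⟩

/-- `γ¹_i` for `i = k.1 + 1 ∈ {1, …, 2g}`. -/
def gam1 (g : ℕ) (k : Fin (2 * g)) : FreeGroup (Fin (2 * g)) :=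
  if k.1 % 2 = 0 then
    prodComm g (k.1 / 2) *
      FreeGroup.of ⟨2 * (k.1 / 2), by have := k.2; omega⟩ *
      FreeGroup.of ⟨2 * (k.1 / 2) + 1, by have := k.2; omega⟩ *
      (FreeGroup.of (⟨2 * (k.1 / 2), by have := k.2; omega⟩ : Fin (2 * g)))⁻¹
  else
    prodComm g (k.1 / 2) *
      ⁅FreeGroup.of (⟨2 * (k.1 / 2), by have := k.2; omega⟩ : Fin (2 * g)),
       FreeGroup.of (⟨2 * (k.1 / 2) + 1, by have := k.2; omega⟩ : Fin (2 * g))⁆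

/-- `γ^τ_i`, `τ = 0, 1`. -/
def gam (g : ℕ) (τ : Fin 2) (k : Fin (2 * g)) : FreeGroup (Fin (2 * g)) :=
  if τ = 0 then gam0 g k else gam1 g k


private lemma sum_pairs {M : Type*} [AddCommMonoid M] (n : ℕ) (a : ℕ → M) :
    ∑ i ∈ Finset.range (2 * n), a i = ∑ l ∈ Finset.range n, (a (2 * l) + a (2 * l + 1)) := by
  induction n with
  | zero => simp
  | succ n ih =>
    rw [Finset.sum_range_succ, ← ih, Nat.mul_succ,
        show 2 * n + 2 = (2 * n + 1) + 1 from rfl, Finset.sum_range_succ,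
        Finset.sum_range_succ, add_assoc]

private lemma commList_length (g : ℕ) : (commList g).length = g := by
  simp [commList]

private lemma prodComm_succ (g l : ℕ) (hl : l < g) :
    prodComm g (l + 1) = prodComm g l *
      ⁅FreeGroup.of (⟨2 * l, by omega⟩ : Fin (2 * g)),
       FreeGroup.of (⟨2 * l + 1, by omega⟩ : Fin (2 * g))⁆ := by
  unfold prodComm
  rw [List.prod_take_succ _ _ (by simpa [commList_length] using hl)]
  congr 1
  simp [commList]

private lemma prodComm_g (g : ℕ) : prodComm g g = surfaceRel g := by
  unfold prodComm surfaceRel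
  rw [List.take_of_length_le (by simp [commList_length])]

/-- If `ρ : F → G` kills the surface relation `R`, then in the free `ℤ`-module `ℤ[G]`
the boundary of the fundamental 2-cycle vanishes:
`∑_{i=1}^{2g} ∑_{τ=0,1} (−1)^τ ([ρ(x_i)] − [ρ(γ^τ_i x_i)] + [ρ(γ^τ_i)]) = 0`. -/
theorem stmt11 (g : ℕ) (hg : 1 ≤ g) (G : Type*) [Group G]
    (ρ : FreeGroup (Fin (2 * g)) →* G) (hρ : ρ (surfaceRel g) = 1) :
    ∑ i : Fin (2 * g), ∑ τ : Fin 2, ((-1 : ℤ) ^ (τ : ℕ)) •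
      (Finsupp.single (ρ (FreeGroup.of i)) (1 : ℤ)
        - Finsupp.single (ρ (gam g τ i * FreeGroup.of i)) (1 : ℤ)
        + Finsupp.single (ρ (gam g τ i)) (1 : ℤ)) = (0 : G →₀ ℤ) := by
  classical
  set T : Fin (2 * g) → (G →₀ ℤ) := fun i => ∑ τ : Fin 2, ((-1 : ℤ) ^ (τ : ℕ)) •
      (Finsupp.single (ρ (FreeGroup.of i)) (1 : ℤ)
        - Finsupp.single (ρ (gam g τ i * FreeGroup.of i)) (1 : ℤ)
        + Finsupp.single (ρ (gam g τ i)) (1 : ℤ)) with hT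
  set f : ℕ → (G →₀ ℤ) := fun i => if h : i < 2 * g then T ⟨i, h⟩ else 0 with hf
  have key : ∀ l : ℕ, ∀ hl : l < g,
      f (2 * l) + f (2 * l + 1) = Finsupp.single (ρ (prodComm g l)) (1 : ℤ)
        - Finsupp.single (ρ (prodComm g (l + 1))) (1 : ℤ) := by
    intro l hl
    have h1 : 2 * l < 2 * g := by omega
    have h2 : 2 * l + 1 < 2 * g := by omega
    rw [hf]
    simp only [dif_pos h1, dif_pos h2, hT]
    have hm0 : (2 * l) % 2 = 0 := by omega
    have hd0 : (2 * l) / 2 = l := by omega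
    have hm1 : (2 * l + 1) % 2 = 1 := by omega
    have hd1 : (2 * l + 1) / 2 = l := by omega
    have e00 : gam g 0 ⟨2 * l, h1⟩ = prodComm g l := by
      simp [gam, gam0, hm0, hd0]
    have e10 : gam g 1 ⟨2 * l, h1⟩ = prodComm g l * FreeGroup.of ⟨2 * l, h1⟩ *
        FreeGroup.of ⟨2 * l + 1, h2⟩ * (FreeGroup.of (⟨2 * l, h1⟩ : Fin (2 * g)))⁻¹ := by
      simp [gam, gam1, hm0, hd0]
    have e01 : gam g 0 ⟨2 * l + 1, h2⟩ = prodComm g l * FreeGroup.of ⟨2 * l, h1⟩ := by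
      simp [gam, gam0, hm1, hd1]
    have e11 : gam g 1 ⟨2 * l + 1, h2⟩ = prodComm g l *
        ⁅FreeGroup.of (⟨2 * l, h1⟩ : Fin (2 * g)),
         FreeGroup.of (⟨2 * l + 1, h2⟩ : Fin (2 * g))⁆ := by
      simp [gam, gam1, hm1, hd1]
    rw [Fin.sum_univ_two, Fin.sum_univ_two, prodComm_succ g l hl]
    simp only [e00, e10, e01, e11, Fin.val_zero, Fin.val_one, pow_zero, pow_one, one_smul,
      neg_smul, commutatorElement_def, map_mul, map_inv, mul_assoc, mul_inv_cancel_left,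
      inv_mul_cancel_left, mul_inv_cancel, inv_mul_cancel, mul_one]
    abel
  have hTf : ∀ i : Fin (2 * g), T i = f i.val := by
    intro i
    rw [hf]
    simp [dif_pos i.2]
  calc ∑ i : Fin (2 * g), T i = ∑ i ∈ Finset.range (2 * g), f i := by
        rw [← Fin.sum_univ_eq_sum_range]
        exact Finset.sum_congr rfl fun i _ => hTf i
    _ = ∑ l ∈ Finset.range g, (f (2 * l) + f (2 * l + 1)) := sum_pairs g f
    _ = ∑ l ∈ Finset.range g, (Finsupp.single (ρ (prodComm g l)) (1 : ℤ)
          - Finsupp.single (ρ (prodComm g (l + 1))) (1 : ℤ)) := by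
        refine Finset.sum_congr rfl fun l hl => key l (Finset.mem_range.mp hl)
    _ = Finsupp.single (ρ (prodComm g 0)) (1 : ℤ)
          - Finsupp.single (ρ (prodComm g g)) (1 : ℤ) :=
        Finset.sum_range_sub' _ g
    _ = 0 := by
        rw [prodComm_g, hρ]
        simp [prodComm, map_one]
end
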